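/- Every regular expansion of a finite set is a simplex: if X = (x_1, …, x_n) is a family of points in ℝ^k, α > 0, and Y = {y_1, …, y_n} ⊂ ℝ^d satisfies ‖y_i − y_j‖² = ‖x_i − x_j‖² + α² for all i ≠ j, then the points y_1, …, y_n are affinely independent. -/

import Mathlib

open scoped Classical

noncomputable section

/-- The `j`-th vertex of a regular `m`-gon in the Euclidean plane with center `c`,
circumradius `r` and angle `θ`. -/
def polygonVertex (c : EuclideanSpace ℝ (Fin 2)) (r θ : ℝ) (m j : ℕ) :
    EuclideanSpace ℝ (Fin 2) :=
  (WithLp.equiv 2 (Fin 2 → ℝ)).symm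
    ![c 0 + r * Real.cos (2 * Real.pi * j / m + θ),
      c 1 + r * Real.sin (2 * Real.pi * j / m + θ)]

/-- `T` is (the vertex set of) a regular `m`-gon of circumradius `r` in the plane. -/
def IsRegularPolygon (m : ℕ) (r : ℝ) (T : Set (EuclideanSpace ℝ (Fin 2))) : Prop :=
  2 ≤ m ∧ 0 < r ∧
    ∃ (c : EuclideanSpace ℝ (Fin 2)) (θ : ℝ),
      T = {p | ∃ j < m, p = polygonVertex c r θ m j}

/-- The Cartesian product of `n` planar sets, viewed inside `ℝ^{2n}`. -/
def toriProduct {n : ℕ} (T : Fin n → Set (EuclideanSpace ℝ (Fin 2))) :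
    Set (EuclideanSpace ℝ (Fin n × Fin 2)) :=
  {x | ∀ i : Fin n, ((WithLp.equiv 2 (Fin 2 → ℝ)).symm fun j => x (i, j)) ∈ T i}

/-- Every regular expansion of a finite family of points is a simplex, i.e. its
points are affinely independent. -/
theorem regular_expansion_affineIndependent
    (n d k : ℕ) (x : Fin n → EuclideanSpace ℝ (Fin k))
    (y : Fin n → EuclideanSpace ℝ (Fin d)) (α : ℝ) (hα : 0 < α)
    (hexp : ∀ i j, i ≠ j →
      dist (y i) (y j) ^ 2 = dist (x i) (x j) ^ 2 + α ^ 2) :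
    AffineIndependent ℝ y := by
  rw [affineIndependent_iff_of_fintype]
  intro w hw h0
  set Sy := ∑ i, ∑ j, w i * w j * (dist (y i) (y j) * dist (y i) (y j)) with hSy
  set Sx := ∑ i, ∑ j, w i * w j * (dist (x i) (x j) * dist (x i) (x j)) with hSx
  have hy : Sy = 0 := by
    have h1 := EuclideanGeometry.inner_weightedVSub y hw y hw
    rw [h0, inner_zero_right] at h1
    rw [← hSy] at h1
    linarith
  have hx : Sx ≤ 0 := by
    have h1 := EuclideanGeometry.inner_weightedVSub x hw x hw
    have h2 : (0:ℝ) ≤ (inner ℝ (Finset.univ.weightedVSub x w) (Finset.univ.weightedVSub x w) : ℝ) :=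
      real_inner_self_nonneg
    rw [h1, ← hSx] at h2
    linarith
  have hsplit : Sy = Sx + α ^ 2 * (∑ i, w i) * (∑ j, w j) - α ^ 2 * ∑ i, w i ^ 2 := by
    have key : ∀ i j : Fin n, w i * w j * (dist (y i) (y j) * dist (y i) (y j))
        = w i * w j * (dist (x i) (x j) * dist (x i) (x j)) + α ^ 2 * (w i * w j)
          - (if i = j then α ^ 2 * (w i * w j) else 0) := by
      intro i j
      by_cases h : i = j
      · subst h; simp
      · have h2 := hexp i j h
        simp only [h, if_false, sub_zero, pow_two] at h2 ⊢
        rw [h2]; ring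
    rw [hSy]
    simp only [key, Finset.sum_sub_distrib, Finset.sum_add_distrib, Finset.sum_ite_eq,
      Finset.mem_univ, if_true]
    rw [← hSx]
    have e1 : ∑ i : Fin n, ∑ j : Fin n, α ^ 2 * (w i * w j)
        = α ^ 2 * (∑ i, w i) * (∑ j, w j) := by
      rw [mul_assoc, Finset.sum_mul_sum]
      simp_rw [Finset.mul_sum]
    have e2 : ∑ i : Fin n, α ^ 2 * (w i * w i) = α ^ 2 * ∑ i, w i ^ 2 := by
      rw [Finset.mul_sum]; congr 1; ext i; ring
    rw [e1, e2]
  have hsum : ∑ i, w i ^ 2 ≤ 0 := by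
    rw [hw] at hsplit
    have hα2 : (0:ℝ) < α ^ 2 := by positivity
    nlinarith [hsplit, hy, hx]
  intro i
  have hz : ∑ i, w i ^ 2 = 0 :=
    le_antisymm hsum (Finset.sum_nonneg fun i _ => sq_nonneg (w i))
  have := (Finset.sum_eq_zero_iff_of_nonneg (fun i _ => sq_nonneg (w i))).mp hz i
    (Finset.mem_univ i)
  exact (pow_eq_zero_iff two_ne_zero).mp this
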